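/- (Tube estimate, forward direction, pathwise part of Lemma 4.4.) Let γ = (γ₁, γ₂) : [0,1] → ℝ² be absolutely continuous with integrable derivative, and set C_γ := ∫₀¹ (|γ₁′(s)| + |γ₂′(s)|) ds. Let ε > 0 and let u = (u₁, u₂, u₃) : [0,1] → ℝ³ be measurable with u₁(t)² + u₂(t)² + |u₃(t)| < ε² for all t ∈ [0,1]. Define z₃(t) := u₃(t) + ∫₀ᵗ ω((u₁(s), u₂(s)), γ′(s)) ds. Then for all t ∈ [0,1]: u₁(t)² + u₂(t)² + |z₃(t)| ≤ 3ε² + ε·C_γ. -/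

import Mathlib

open MeasureTheory Set

noncomputable section

/-- The standard symplectic form on `ℝ²`. -/
def omegaForm (v w : ℝ × ℝ) : ℝ := v.1 * w.2 - w.1 * v.2

/-- (Tube estimate, forward direction, pathwise part of Lemma 4.4.)
Let `γ : [0,1] → ℝ²` be absolutely continuous with integrable derivative `γ′`, and set
`C_γ := ∫₀¹ (|γ₁′(s)| + |γ₂′(s)|) ds`. Let `ε > 0` and `u = (u₁, u₂, u₃)` be measurable with
`u₁(t)² + u₂(t)² + |u₃(t)| < ε²` on `[0,1]`. Define
`z₃(t) := u₃(t) + ∫₀ᵗ ω((u₁(s), u₂(s)), γ′(s)) ds`. Then for all `t ∈ [0,1]`,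
`u₁(t)² + u₂(t)² + |z₃(t)| ≤ 3 ε² + ε C_γ`. -/
theorem heisenberg_tube_estimate_forward
    (γ γ' : ℝ → ℝ × ℝ) (hγ' : IntegrableOn γ' (Icc (0:ℝ) 1))
    (hγ : ∀ t ∈ Icc (0:ℝ) 1, γ t = γ 0 + ∫ s in (0:ℝ)..t, γ' s)
    (Cγ : ℝ) (hC : Cγ = ∫ s in (0:ℝ)..1, (|(γ' s).1| + |(γ' s).2|))
    (ε : ℝ) (hε : 0 < ε)
    (u : ℝ → (ℝ × ℝ) × ℝ) (hu : Measurable u)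
    (hub : ∀ t ∈ Icc (0:ℝ) 1, (u t).1.1 ^ 2 + (u t).1.2 ^ 2 + |(u t).2| < ε ^ 2)
    (z₃ : ℝ → ℝ)
    (hz₃ : ∀ t, z₃ t = (u t).2 + ∫ s in (0:ℝ)..t, omegaForm (u s).1 (γ' s)) :
    ∀ t ∈ Icc (0:ℝ) 1, (u t).1.1 ^ 2 + (u t).1.2 ^ 2 + |z₃ t| ≤ 3 * ε ^ 2 + ε * Cγ := by
  intro t ht
  obtain ⟨ht0, ht1⟩ := ht
  set g : ℝ → ℝ := fun s => ε * (|(γ' s).1| + |(γ' s).2|) with hg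
  -- g is interval integrable on [0,1]
  have hgint : IntervalIntegrable g volume 0 1 := by
    have h1 : IntegrableOn (fun s => |(γ' s).1| + |(γ' s).2|) (Icc (0:ℝ) 1) := by
      have := (hγ'.fst.abs.add hγ'.snd.abs)
      exact this
    have h2 : IntegrableOn g (Icc (0:ℝ) 1) := h1.const_mul ε
    have h3 : IntegrableOn g (uIcc (0:ℝ) 1) := by
      rwa [uIcc_of_le (by norm_num : (0:ℝ) ≤ 1)]
    exact h3.intervalIntegrable
  have hgint_t : IntervalIntegrable g volume 0 t := by
    apply hgint.mono_set
    rw [uIcc_of_le ht0, uIcc_of_le (by norm_num : (0:ℝ) ≤ 1)]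
    exact Icc_subset_Icc le_rfl ht1
  -- pointwise bound for all s in [0,1]
  have hbd : ∀ s ∈ Icc (0:ℝ) 1, ‖omegaForm (u s).1 (γ' s)‖ ≤ g s := by
    intro s hs
    have h := hub s hs
    have h1 : |(u s).1.1| ≤ ε := by
      rw [abs_le]; constructor <;> nlinarith [abs_nonneg (u s).2, sq_nonneg (u s).1.2]
    have h2 : |(u s).1.2| ≤ ε := by
      rw [abs_le]; constructor <;> nlinarith [abs_nonneg (u s).2, sq_nonneg (u s).1.1]
    have h3 : ‖omegaForm (u s).1 (γ' s)‖ ≤ |(u s).1.1| * |(γ' s).2| + |(γ' s).1| * |(u s).1.2| := by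
      rw [Real.norm_eq_abs, omegaForm]
      refine (abs_sub _ _).trans ?_
      rw [abs_mul, abs_mul]
    rw [Real.norm_eq_abs] at h3 ⊢
    show |omegaForm (u s).1 (γ' s)| ≤ ε * (|(γ' s).1| + |(γ' s).2|)
    nlinarith [mul_nonneg (sub_nonneg.2 h1) (abs_nonneg (γ' s).2),
      mul_nonneg (sub_nonneg.2 h2) (abs_nonneg (γ' s).1)]
  -- bound the integral
  have habs : |∫ s in (0:ℝ)..t, omegaForm (u s).1 (γ' s)| ≤ ∫ s in (0:ℝ)..t, g s := by
    have key : ‖∫ s in (0:ℝ)..t, omegaForm (u s).1 (γ' s)‖ ≤ |∫ s in (0:ℝ)..t, g s| := by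
      apply intervalIntegral.norm_integral_le_abs_of_norm_le _ hgint_t
      rw [ae_restrict_iff' measurableSet_uIoc]
      filter_upwards with s hs
      apply hbd
      rw [uIoc_of_le ht0] at hs
      exact ⟨le_of_lt hs.1, hs.2.trans ht1⟩
    have hgpos : 0 ≤ ∫ s in (0:ℝ)..t, g s := by
      apply intervalIntegral.integral_nonneg ht0
      intro s _
      positivity
    rwa [Real.norm_eq_abs, abs_of_nonneg hgpos] at key
  have hmono : (∫ s in (0:ℝ)..t, g s) ≤ ∫ s in (0:ℝ)..1, g s := by
    apply intervalIntegral.integral_mono_interval le_rfl ht0 ht1 _ hgint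
    filter_upwards with s
    positivity
  have hCg : (∫ s in (0:ℝ)..1, g s) = ε * Cγ := by
    rw [hC, hg, intervalIntegral.integral_const_mul]
  have hu3 := hub t ⟨ht0, ht1⟩
  have hz := hz₃ t
  have : |z₃ t| ≤ |(u t).2| + ε * Cγ := by
    rw [hz]
    calc |(u t).2 + ∫ s in (0:ℝ)..t, omegaForm (u s).1 (γ' s)|
        ≤ |(u t).2| + |∫ s in (0:ℝ)..t, omegaForm (u s).1 (γ' s)| := abs_add_le _ _
      _ ≤ |(u t).2| + ε * Cγ := by
          have := habs.trans (hmono.trans_eq hCg); linarith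
  have hCnn : 0 ≤ ε * Cγ := by
    rw [← hCg]
    apply intervalIntegral.integral_nonneg (by norm_num)
    intro s _
    simp only [hg]
    positivity
  nlinarith [sq_nonneg ε]
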